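/- Let W = {x : r(x,G_x) < βn} and U = {x : r(x,G_x) ≥ αn} with β = α − Δ/n, and consider the probabilistic mechanism that selects x with probability 1 if x ∈ W, 0 if x ∈ U, and 1/2 otherwise. Its expected coincidence with I_α(G) is at least (|W| + |U|)/n ≥ β = α − Δ/n, for every graph G with maximal out-degree Δ ≤ αn. -/

import Mathlib

open Finset
open scoped Classical

/-- The in-edges of a node `x` in the edge set `E`. -/
def inEdges {V : Type*} [DecidableEq V] (E : Finset (V × V)) (x : V) : Finset (V × V) :=
  E.filter (fun e => e.2 = x)

/-- The out-edges of a node `x` in the edge set `E`. -/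
def outEdges {V : Type*} [DecidableEq V] (E : Finset (V × V)) (x : V) : Finset (V × V) :=
  E.filter (fun e => e.1 = x)

/-- The score of a node: the average of the weights of its in-edges, 0 if it has none. -/
noncomputable def score {V : Type*} [DecidableEq V] (E : Finset (V × V)) (w : V × V → ℝ)
    (x : V) : ℝ :=
  if inEdges E x = ∅ then 0 else (∑ e ∈ inEdges E x, w e) / (inEdges E x).card

/-- The ranking of a node: the number of nodes with strictly greater score. -/
noncomputable def rank {V : Type*} [Fintype V] [DecidableEq V] (E : Finset (V × V))
    (w : V × V → ℝ) (x : V) : ℕ :=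
  (Finset.univ.filter (fun y => score E w y > score E w x)).card

/-- The weight function obtained from `w` by setting all weights on out-edges of `x` to −1. -/
def negOut {V : Type*} [DecidableEq V] (w : V × V → ℝ) (x : V) : V × V → ℝ :=
  fun e => if e.1 = x then -1 else w e

lemma score_congr {V : Type*} [DecidableEq V] (E : Finset (V × V)) (w w' : V × V → ℝ)
    (y : V) (h : ∀ e ∈ inEdges E y, w' e = w e) : score E w' y = score E w y := by
  unfold score
  split
  · rfl
  · rw [Finset.sum_congr rfl h]

lemma score_mono {V : Type*} [DecidableEq V] (E : Finset (V × V)) (w w' : V × V → ℝ)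
    (y : V) (h : ∀ e ∈ inEdges E y, w' e ≤ w e) : score E w' y ≤ score E w y := by
  unfold score
  split
  · exact le_refl 0
  · exact div_le_div_of_nonneg_right (Finset.sum_le_sum h) (by positivity)

lemma score_negOut_self {V : Type*} [DecidableEq V] (E : Finset (V × V)) (w : V × V → ℝ)
    (hloop : ∀ e ∈ E, e.1 ≠ e.2) (x : V) : score E (negOut w x) x = score E w x := by
  apply score_congr
  intro e he
  simp only [inEdges, mem_filter] at he
  have : e.1 ≠ x := he.2 ▸ hloop e he.1
  simp [negOut, this]

lemma score_negOut_le {V : Type*} [DecidableEq V] (E : Finset (V × V)) (w : V × V → ℝ)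
    (hw : ∀ e ∈ E, -1 ≤ w e ∧ w e ≤ 1) (x y : V) :
    score E (negOut w x) y ≤ score E w y := by
  apply score_mono
  intro e he
  simp only [inEdges, mem_filter] at he
  by_cases h : e.1 = x
  · simp [negOut, h, (hw e he.1).1]
  · simp [negOut, h]

lemma rank_negOut_le {V : Type*} [Fintype V] [DecidableEq V] (E : Finset (V × V))
    (w : V × V → ℝ) (hloop : ∀ e ∈ E, e.1 ≠ e.2) (hw : ∀ e ∈ E, -1 ≤ w e ∧ w e ≤ 1)
    (x : V) : rank E (negOut w x) x ≤ rank E w x := by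
  apply Finset.card_le_card
  intro y hy
  simp only [mem_filter, mem_univ, true_and] at hy ⊢
  calc score E w x = score E (negOut w x) x := (score_negOut_self E w hloop x).symm
    _ < score E (negOut w x) y := hy
    _ ≤ score E w y := score_negOut_le E w hw x y

lemma rank_le_rank_negOut_add {V : Type*} [Fintype V] [DecidableEq V] (E : Finset (V × V))
    (w : V × V → ℝ) (hloop : ∀ e ∈ E, e.1 ≠ e.2) (x : V) :
    rank E w x ≤ rank E (negOut w x) x + (outEdges E x).card := by
  have hsub : (Finset.univ.filter (fun y => score E w y > score E w x)) ⊆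
      (Finset.univ.filter (fun y => score E (negOut w x) y > score E (negOut w x) x)) ∪
        (outEdges E x).image Prod.snd := by
    intro y hy
    simp only [mem_filter, mem_univ, true_and] at hy
    by_cases hT : y ∈ (outEdges E x).image Prod.snd
    · exact mem_union_right _ hT
    · apply mem_union_left
      simp only [mem_filter, mem_univ, true_and]
      have heq : score E (negOut w x) y = score E w y := by
        apply score_congr
        intro e he
        simp only [inEdges, mem_filter] at he
        have hne : e.1 ≠ x := by
          intro h
          apply hT
          refine Finset.mem_image.2 ⟨e, ?_, he.2⟩
          simp [outEdges, mem_filter, he.1, h]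
        simp [negOut, hne]
      rw [heq, score_negOut_self E w hloop x]
      exact hy
  calc rank E w x ≤ ((Finset.univ.filter
        (fun y => score E (negOut w x) y > score E (negOut w x) x)) ∪
        (outEdges E x).image Prod.snd).card := Finset.card_le_card hsub
    _ ≤ rank E (negOut w x) x + ((outEdges E x).image Prod.snd).card := Finset.card_union_le _ _
    _ ≤ rank E (negOut w x) x + (outEdges E x).card := by
        exact Nat.add_le_add_left (Finset.card_image_le) _

lemma count_low_rank {V : Type*} [Fintype V] [DecidableEq V] (E : Finset (V × V))
    (w : V × V → ℝ) (c : ℝ) (hc : c ≤ Fintype.card V) :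
    c ≤ ((Finset.univ.filter (fun x => (rank E w x : ℝ) < c)).card : ℝ) := by
  by_cases h : (Finset.univ.filter (fun x => c ≤ (rank E w x : ℝ))).Nonempty
  · obtain ⟨m, hm, hmax⟩ := Finset.exists_max_image _ (fun y => score E w y) h
    simp only [mem_filter, mem_univ, true_and] at hm
    have hsub : (Finset.univ.filter (fun y => score E w y > score E w m)) ⊆
        Finset.univ.filter (fun x => (rank E w x : ℝ) < c) := by
      intro y hy
      simp only [mem_filter, mem_univ, true_and] at hy ⊢
      by_contra hy'
      push_neg at hy'
      have := hmax y (by simp only [mem_filter, mem_univ, true_and]; exact hy')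
      exact absurd hy (not_lt.2 this)
    calc c ≤ (rank E w m : ℝ) := hm
      _ ≤ _ := by exact_mod_cast Finset.card_le_card hsub
  · have : Finset.univ.filter (fun x => (rank E w x : ℝ) < c) = Finset.univ := by
      apply Finset.filter_true_of_mem
      intro x _
      by_contra hx
      exact h ⟨x, by simp only [mem_filter, mem_univ, true_and]; exact not_lt.1 hx⟩
    rw [this]
    simpa using hc

/-- Let W = {x : r(x,G_x) < βn} and U = {x : r(x,G_x) ≥ αn}, β = α − Δ/n.
The IC probabilistic mechanism assigning probability 1 on W, 0 on U and 1/2 elsewhere has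
expected coincidence with I_α(G) at least (|W|+|U|)/n ≥ β = α − Δ/n, for every graph with
maximal out-degree Δ ≤ αn. -/
theorem three_set_mechanism_quality {V : Type*} [Fintype V] [DecidableEq V]
    (E : Finset (V × V)) (w : V × V → ℝ) (n Δ : ℕ) (α : ℝ)
    (hn : Fintype.card V = n) (hn0 : 0 < n)
    (hα0 : 0 < α) (hα1 : α < 1) (hΔ : (Δ : ℝ) ≤ α * n)
    (hloop : ∀ e ∈ E, e.1 ≠ e.2)
    (hdeg : ∀ y : V, (outEdges E y).card ≤ Δ)
    (hw : ∀ e ∈ E, -1 ≤ w e ∧ w e ≤ 1)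
    (W U : Finset V)
    (hW : W = Finset.univ.filter (fun x => (rank E (negOut w x) x : ℝ) < (α - (Δ : ℝ) / n) * n))
    (hU : U = Finset.univ.filter (fun x => α * n ≤ (rank E (negOut w x) x : ℝ)))
    (p : V → ℝ)
    (hp : ∀ x, p x = if x ∈ W then 1 else if x ∈ U then 0 else 1 / 2) :
    ((W.card : ℝ) + U.card) / n ≤
        (1 / (n : ℝ)) * ∑ x : V, (2 * p x - 1) *
          (if (rank E w x : ℝ) < α * n then (1 : ℝ) else -1) ∧
      α - (Δ : ℝ) / n ≤ ((W.card : ℝ) + U.card) / n := by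
  
  have hnR : (0:ℝ) < n := by exact_mod_cast hn0
  have hβn : (α - (Δ : ℝ) / n) * n = α * n - Δ := by field_simp
  -- W-membership implies low rank in original graph
  have hWrank : ∀ x ∈ W, (rank E w x : ℝ) < α * n := by
    intro x hx
    rw [hW, mem_filter] at hx
    have h1 : rank E w x ≤ rank E (negOut w x) x + (outEdges E x).card :=
      rank_le_rank_negOut_add E w hloop x
    have h2 : (rank E w x : ℝ) ≤ (rank E (negOut w x) x : ℝ) + Δ := by
      have := (hdeg x)
      calc (rank E w x : ℝ) ≤ (rank E (negOut w x) x : ℝ) + (outEdges E x).card := by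
            exact_mod_cast h1
        _ ≤ _ := by exact_mod_cast Nat.add_le_add_left this _
    calc (rank E w x : ℝ) ≤ (rank E (negOut w x) x : ℝ) + Δ := h2
      _ < (α - (Δ : ℝ) / n) * n + Δ := by linarith [hx.2]
      _ = α * n := by rw [hβn]; ring
  have hUrank : ∀ x ∈ U, α * n ≤ (rank E w x : ℝ) := by
    intro x hx
    rw [hU, mem_filter] at hx
    have h1 : rank E (negOut w x) x ≤ rank E w x := rank_negOut_le E w hloop hw x
    calc α * n ≤ (rank E (negOut w x) x : ℝ) := hx.2
      _ ≤ (rank E w x : ℝ) := by exact_mod_cast h1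
  have hdisj : Disjoint W U := by
    rw [Finset.disjoint_left]
    intro x hxW hxU
    rw [hW, mem_filter] at hxW
    rw [hU, mem_filter] at hxU
    have : (α - (Δ : ℝ) / n) * n ≤ α * n := by
      rw [hβn]
      have : (0:ℝ) ≤ Δ := Nat.cast_nonneg _
      linarith
    linarith [hxW.2, hxU.2]
  -- the sum equals |W| + |U|
  have hsum : ∑ x : V, (2 * p x - 1) *
      (if (rank E w x : ℝ) < α * n then (1 : ℝ) else -1)
      = (W.card : ℝ) + U.card := by
    have hterm : ∀ x : V, (2 * p x - 1) *
        (if (rank E w x : ℝ) < α * n then (1 : ℝ) else -1)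
        = (if x ∈ W ∪ U then (1:ℝ) else 0) := by
      intro x
      rw [hp]
      by_cases hxW : x ∈ W
      · rw [if_pos hxW, if_pos (hWrank x hxW), if_pos (mem_union_left _ hxW)]; ring
      · by_cases hxU : x ∈ U
        · rw [if_neg hxW, if_pos hxU, if_neg (not_lt.2 (hUrank x hxU)),
            if_pos (mem_union_right _ hxU)]; ring
        · have hnu : x ∉ W ∪ U := by simp [mem_union, hxW, hxU]
          rw [if_neg hxW, if_neg hxU, if_neg hnu]
          split <;> ring
    rw [Finset.sum_congr rfl (fun x _ => hterm x)]
    rw [Finset.sum_ite_mem, Finset.univ_inter, Finset.sum_const, nsmul_eq_mul, mul_one,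
      Finset.card_union_of_disjoint hdisj]
    push_cast
    ring
  constructor
  · rw [hsum, one_div, inv_mul_eq_div]
  · -- |W| ≥ βn via counting
    have hsub : (Finset.univ.filter (fun x => (rank E w x : ℝ) < (α - (Δ : ℝ) / n) * n)) ⊆ W := by
      intro x hx
      rw [mem_filter] at hx
      rw [hW, mem_filter]
      refine ⟨mem_univ x, ?_⟩
      have h1 : rank E (negOut w x) x ≤ rank E w x := rank_negOut_le E w hloop hw x
      calc (rank E (negOut w x) x : ℝ) ≤ (rank E w x : ℝ) := by exact_mod_cast h1
        _ < _ := hx.2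
    have hc : (α - (Δ : ℝ) / n) * n ≤ (Fintype.card V : ℝ) := by
      rw [hn, hβn]
      nlinarith
    have hcount := count_low_rank E w ((α - (Δ : ℝ) / n) * n) hc
    have hWcard : (α - (Δ : ℝ) / n) * n ≤ (W.card : ℝ) := by
      calc (α - (Δ : ℝ) / n) * n ≤ _ := hcount
        _ ≤ (W.card : ℝ) := by exact_mod_cast Finset.card_le_card hsub
    rw [le_div_iff₀ hnR]
    have : (0:ℝ) ≤ (U.card : ℝ) := Nat.cast_nonneg _
    linarith
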